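/- Let K be an algebraically closed field of characteristic zero, P(t) = c(t−e₁)⋯(t−e_n) a separable polynomial with c ≠ 0, and X ⊂ 𝔸³_K the affine surface defined by u₁u₂ = P(t). Then every invertible regular function on X is constant: O(X)* = K*. -/

import Mathlib

open MvPolynomial

noncomputable section ChateletAux
open Polynomial LaurentPolynomial


theorem poly_dvd_pow {A : Type*} [CommRing A] [IsDomain A] (F G : A[X]) (N : ℕ) (h : F * G = Polynomial.X ^ N) :
    ∃ (u : A) (a : ℕ), IsUnit u ∧ F = Polynomial.C u * Polynomial.X ^ a := by
  have hdvd : F ∣ (Polynomial.X :A[X]) ^ N := ⟨G, h.symm⟩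
  obtain ⟨i, hi, hassoc⟩ := (dvd_prime_pow Polynomial.prime_X N).mp hdvd
  obtain ⟨v, hv⟩ := hassoc.symm
  obtain ⟨b, hb, hCb⟩ := Polynomial.isUnit_iff.mp v.isUnit
  exact ⟨b, i, hb, by rw [← hv, ← hCb]; ring⟩

theorem laurent_isUnit {A : Type*} [CommRing A] [IsDomain A] {f : LaurentPolynomial A}
    (hf : IsUnit f) :
    ∃ (u : A) (m : ℤ), IsUnit u ∧ f = LaurentPolynomial.C u * LaurentPolynomial.T m := by
  obtain ⟨g, hg⟩ := hf.exists_right_inv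
  obtain ⟨n, F, hF⟩ := exists_T_pow f
  obtain ⟨m', G, hG⟩ := exists_T_pow g
  have key : Polynomial.toLaurent (F * G) = Polynomial.toLaurent ((Polynomial.X :A[X]) ^ (n + m')) := by
    rw [map_mul, hF, hG, Polynomial.toLaurent_X_pow]
    rw [show f * T n * (g * T m') = (f * g) * (T n * T m') by ring, hg, one_mul, ← T_add]
    norm_cast
  have hFG : F * G = Polynomial.X ^ (n + m') := Polynomial.toLaurent_injective key
  obtain ⟨u, a, hu, hFeq⟩ := poly_dvd_pow F G _ hFG
  refine ⟨u, (a : ℤ) - n, hu, ?_⟩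
  have : f = Polynomial.toLaurent F * T (-n) := by
    rw [hF]; rw [mul_T_assoc]; norm_num
  rw [this, hFeq, map_mul, Polynomial.toLaurent_C, Polynomial.toLaurent_X_pow, mul_assoc, ← T_add]
  rw [sub_eq_add_neg]


variable {K : Type} [Field K]

/-- coefficient ring hom K → Laurent(K[t]) -/
def phi0 (K : Type) [Field K] : K →+* LaurentPolynomial (Polynomial K) :=
  (LaurentPolynomial.C).comp Polynomial.C

/-- K[t] → MvPolynomial, t ↦ X 2 -/
def PhiIn (K : Type) [Field K] : Polynomial K →+* MvPolynomial (Fin 3) K :=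
  Polynomial.eval₂RingHom MvPolynomial.C (MvPolynomial.X 2)

def psi (p : Polynomial K) : MvPolynomial (Fin 3) K →+* LaurentPolynomial (Polynomial K) :=
  MvPolynomial.eval₂Hom (phi0 K)
    ![T 1, LaurentPolynomial.C p * T (-1), LaurentPolynomial.C Polynomial.X]

def psi2 (p : Polynomial K) : MvPolynomial (Fin 3) K →+* LaurentPolynomial (Polynomial K) :=
  MvPolynomial.eval₂Hom (phi0 K)
    ![LaurentPolynomial.C p * T (-1), T 1, LaurentPolynomial.C Polynomial.X]

lemma psi_X0 (p : Polynomial K) : psi p (MvPolynomial.X 0) = T 1 := by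
  simp [psi]

lemma psi_X1 (p : Polynomial K) :
    psi p (MvPolynomial.X 1) = LaurentPolynomial.C p * T (-1) := by
  simp [psi]

lemma psi_C (p : Polynomial K) (k : K) :
    psi p (MvPolynomial.C k) = LaurentPolynomial.C (Polynomial.C k) := by
  simp [psi, phi0]

lemma psi_PhiIn (p q : Polynomial K) : psi p (PhiIn K q) = LaurentPolynomial.C q := by
  rw [PhiIn, Polynomial.coe_eval₂RingHom, Polynomial.hom_eval₂]
  have h1 : (psi p).comp MvPolynomial.C = (LaurentPolynomial.C).comp (Polynomial.C) := by
    ext k; simp [psi, phi0]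
  have h2 : psi p (MvPolynomial.X 2) = LaurentPolynomial.C Polynomial.X := by simp [psi]
  rw [h1, h2, ← Polynomial.hom_eval₂, Polynomial.eval₂_C_X]


def dlt (m : Fin 3 →₀ ℕ) : ℤ := (m 0 : ℤ) - (m 1 : ℤ)

lemma psi_monomial (p : Polynomial K) (m : Fin 3 →₀ ℕ) (k : K) :
    psi p (MvPolynomial.monomial m k)
      = LaurentPolynomial.C (Polynomial.C k * Polynomial.X ^ (m 2) * p ^ (m 1)) * T (dlt m) := by
  rw [psi, MvPolynomial.eval₂Hom_monomial]
  rw [Finsupp.prod_pow, Fin.prod_univ_three]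
  simp only [Matrix.cons_val_zero, Matrix.cons_val_one, Matrix.head_cons,
    Matrix.cons_val_two, Matrix.tail_cons, mul_pow, T_pow, map_mul, map_pow]
  rw [show dlt m = (m 0 : ℤ) * 1 + (m 1 : ℤ) * (-1) by rw [dlt]; ring, T_add]
  rw [phi0, RingHom.comp_apply]
  ring

lemma psi_apply_zero (p : Polynomial K) (f : MvPolynomial (Fin 3) K) (e : ℤ)
    (hs : ∀ m ∈ f.support, dlt m ≠ e) : (psi p f).coeff e = 0 := by
  conv_lhs => rw [← MvPolynomial.support_sum_monomial_coeff f]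
  rw [map_sum, AddMonoidAlgebra.coeff_sum, Finsupp.finset_sum_apply]
  refine Finset.sum_eq_zero fun m hm => ?_
  rw [psi_monomial, ← single_eq_C_mul_T]
  exact Finsupp.single_eq_of_ne' (hs m hm)


def Phi (K : Type) [Field K] : Polynomial (Polynomial K) →+* MvPolynomial (Fin 3) K :=
  Polynomial.eval₂RingHom (PhiIn K) (MvPolynomial.X 0 * MvPolynomial.X 1)

lemma psi_X0X1 (p : Polynomial K) :
    psi p (MvPolynomial.X 0 * MvPolynomial.X 1) = LaurentPolynomial.C p := by
  rw [map_mul, psi_X0, psi_X1, show T (1:ℤ) * (LaurentPolynomial.C p * T (-1))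
    = LaurentPolynomial.C p * (T 1 * T (-1)) by ring, ← T_add]
  norm_num

lemma psi_Phi (p : Polynomial K) (Q : Polynomial (Polynomial K)) :
    psi p (Phi K Q) = LaurentPolynomial.C (Q.eval p) := by
  rw [Phi, Polynomial.coe_eval₂RingHom, Polynomial.hom_eval₂]
  have h1 : (psi p).comp (PhiIn K) = LaurentPolynomial.C :=
    RingHom.ext fun q => psi_PhiIn p q
  have h2 := Polynomial.hom_eval₂ (p := Q) (f := RingHom.id (Polynomial K))
    (g := (LaurentPolynomial.C : Polynomial K →+* LaurentPolynomial (Polynomial K))) p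
  rw [RingHom.comp_id] at h2
  rw [h1, psi_X0X1, ← h2]
  rfl


lemma Phi_X_sub_C (p : Polynomial K) :
    Phi K (Polynomial.X - Polynomial.C p)
      = MvPolynomial.X 0 * MvPolynomial.X 1 - PhiIn K p := by
  rw [map_sub, Phi]
  simp only [Polynomial.coe_eval₂RingHom, Polynomial.eval₂_X, Polynomial.eval₂_C]

lemma monomial_expand (m : Fin 3 →₀ ℕ) (k : K) :
    MvPolynomial.monomial m k = MvPolynomial.C k * MvPolynomial.X 0 ^ (m 0)
      * MvPolynomial.X 1 ^ (m 1) * MvPolynomial.X 2 ^ (m 2) := by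
  rw [MvPolynomial.monomial_eq, Finsupp.prod_pow, Fin.prod_univ_three]
  ring

lemma Phi_term (cm : K) (a b : ℕ) :
    Phi K (Polynomial.C (Polynomial.C cm * Polynomial.X ^ b) * Polynomial.X ^ a)
      = MvPolynomial.C cm * MvPolynomial.X 2 ^ b
        * (MvPolynomial.X 0 * MvPolynomial.X 1) ^ a := by
  rw [Phi]
  simp only [Polynomial.coe_eval₂RingHom, Polynomial.eval₂_mul, Polynomial.eval₂_C,
    Polynomial.eval₂_X_pow, Polynomial.eval₂_pow]
  rw [Polynomial.eval₂_X]
  congr 1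
  rw [PhiIn]
  simp only [Polynomial.coe_eval₂RingHom, Polynomial.eval₂_mul, Polynomial.eval₂_C,
    Polynomial.eval₂_X_pow]

lemma hom_mem_pos (p : Polynomial K) (dn : ℕ) (f : MvPolynomial (Fin 3) K)
    (hsupp : ∀ m ∈ f.support, m 0 = m 1 + dn) (hf : psi p f = 0) :
    f ∈ Ideal.span {MvPolynomial.X 0 * MvPolynomial.X 1 - PhiIn K p} := by
  classical
  set Q : Polynomial (Polynomial K) := ∑ m ∈ f.support,
    Polynomial.C (Polynomial.C (MvPolynomial.coeff m f) * Polynomial.X ^ (m 2))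
      * Polynomial.X ^ (m 1) with hQ
  have hfQ : f = MvPolynomial.X 0 ^ dn * Phi K Q := by
    rw [hQ, map_sum, Finset.mul_sum]
    conv_lhs => rw [← MvPolynomial.support_sum_monomial_coeff f]
    refine Finset.sum_congr rfl fun m hm => ?_
    rw [Phi_term, monomial_expand, hsupp m hm]
    ring
  have hev : Q.eval p = 0 := by
    have h0 : psi p f = T dn * LaurentPolynomial.C (Q.eval p) := by
      rw [hfQ, map_mul, map_pow, psi_X0, psi_Phi, T_pow]
      norm_num
    rw [hf] at h0
    have h1 : LaurentPolynomial.C (Q.eval p) = 0 := by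
      have := congrArg (fun z => T (-(dn:ℤ)) * z) h0
      simp only [mul_zero] at this
      rw [show T (-(dn:ℤ)) * (T (dn:ℤ) * LaurentPolynomial.C (Q.eval p))
        = (T (-(dn:ℤ)) * T (dn:ℤ)) * LaurentPolynomial.C (Q.eval p) by ring, ← T_add] at this
      norm_num at this
      rw [this]
    have h2 : (LaurentPolynomial.C (Q.eval p)).coeff (0:ℤ) = 0 := by rw [h1]; rfl
    simpa using h2
  obtain ⟨Q', hQ'⟩ := (Polynomial.dvd_iff_isRoot.mpr hev)
  rw [Ideal.mem_span_singleton, hfQ, hQ', map_mul, Phi_X_sub_C]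
  exact ⟨MvPolynomial.X 0 ^ dn * Phi K Q', by ring⟩

lemma hom_mem_neg (p : Polynomial K) (hp : p ≠ 0) (dn : ℕ) (f : MvPolynomial (Fin 3) K)
    (hsupp : ∀ m ∈ f.support, m 1 = m 0 + dn) (hf : psi p f = 0) :
    f ∈ Ideal.span {MvPolynomial.X 0 * MvPolynomial.X 1 - PhiIn K p} := by
  classical
  set Q : Polynomial (Polynomial K) := ∑ m ∈ f.support,
    Polynomial.C (Polynomial.C (MvPolynomial.coeff m f) * Polynomial.X ^ (m 2))
      * Polynomial.X ^ (m 0) with hQ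
  have hfQ : f = MvPolynomial.X 1 ^ dn * Phi K Q := by
    rw [hQ, map_sum, Finset.mul_sum]
    conv_lhs => rw [← MvPolynomial.support_sum_monomial_coeff f]
    refine Finset.sum_congr rfl fun m hm => ?_
    rw [Phi_term, monomial_expand, hsupp m hm]
    ring
  have hev : Q.eval p = 0 := by
    have h0 : psi p f = LaurentPolynomial.C (p ^ dn * Q.eval p) * T (-(dn:ℤ)) := by
      rw [hfQ, map_mul, map_pow, psi_X1, psi_Phi, mul_pow, T_pow, map_mul, map_pow]
      ring
    rw [hf] at h0
    have h1 : LaurentPolynomial.C (p ^ dn * Q.eval p) = 0 := by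
      have := congrArg (fun z => z * T ((dn:ℤ))) h0.symm
      simp only [zero_mul] at this
      rw [mul_T_assoc, ← sub_eq_neg_add, sub_self, T_zero, mul_one] at this
      exact this
    have h2 : (LaurentPolynomial.C (p ^ dn * Q.eval p)).coeff (0:ℤ) = 0 := by rw [h1]; rfl
    have h3 : p ^ dn * Q.eval p = 0 := by
      rwa [LaurentPolynomial.C_apply, if_pos rfl] at h2
    exact (mul_eq_zero.mp h3).resolve_left (pow_ne_zero _ hp)
  obtain ⟨Q', hQ'⟩ := (Polynomial.dvd_iff_isRoot.mpr hev)
  rw [Ideal.mem_span_singleton, hfQ, hQ', map_mul, Phi_X_sub_C]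
  exact ⟨MvPolynomial.X 1 ^ dn * Phi K Q', by ring⟩


lemma ker_psi_aux (p : Polynomial K) (hp : p ≠ 0) :
    ∀ (N : ℕ) (f : MvPolynomial (Fin 3) K), (f.support.image dlt).card ≤ N →
      psi p f = 0 → f ∈ Ideal.span {MvPolynomial.X 0 * MvPolynomial.X 1 - PhiIn K p} := by
  classical
  intro N
  induction N with
  | zero =>
    intro f hcard _
    have : f.support.image dlt = ∅ := Finset.card_eq_zero.mp (Nat.le_zero.mp hcard)
    have hsupp : f.support = ∅ := Finset.image_eq_empty.mp this
    rw [show f = 0 from MvPolynomial.support_eq_empty.mp hsupp]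
    exact Ideal.zero_mem _
  | succ N ih =>
    intro f hcard hf
    by_cases hne : f.support = ∅
    · rw [show f = 0 from MvPolynomial.support_eq_empty.mp hne]
      exact Ideal.zero_mem _
    obtain ⟨m₀, hm₀⟩ := Finset.nonempty_iff_ne_empty.mpr hne
    set d : ℤ := dlt m₀ with hd
    set g : MvPolynomial (Fin 3) K := ∑ m ∈ f.support.filter (fun m => dlt m = d),
      MvPolynomial.monomial m (MvPolynomial.coeff m f) with hg
    have hcoeffg : ∀ m, MvPolynomial.coeff m g
        = if dlt m = d then MvPolynomial.coeff m f else 0 := by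
      intro m
      rw [hg, MvPolynomial.coeff_sum]
      simp only [MvPolynomial.coeff_monomial]
      rw [Finset.sum_ite_eq' (f.support.filter (fun m => dlt m = d)) m
        (fun m' => MvPolynomial.coeff m' f)]
      by_cases h1 : dlt m = d
      · rw [if_pos h1]
        by_cases h2 : MvPolynomial.coeff m f = 0
        · rw [h2]; simp
        · rw [if_pos (Finset.mem_filter.mpr ⟨MvPolynomial.mem_support_iff.mpr h2, h1⟩)]
      · rw [if_neg h1, if_neg]
        intro hmem
        exact h1 (Finset.mem_filter.mp hmem).2
    have hgsupp : ∀ m ∈ g.support, dlt m = d := by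
      intro m hm
      have := MvPolynomial.mem_support_iff.mp hm
      rw [hcoeffg] at this
      by_contra h
      rw [if_neg h] at this
      exact this rfl
    have hhsupp : ∀ m ∈ (f - g).support, dlt m ≠ d ∧ m ∈ f.support := by
      intro m hm
      have hne0 := MvPolynomial.mem_support_iff.mp hm
      rw [MvPolynomial.coeff_sub, hcoeffg] at hne0
      by_cases h : dlt m = d
      · rw [if_pos h, sub_self] at hne0; exact absurd rfl hne0
      · rw [if_neg h, sub_zero] at hne0
        exact ⟨h, MvPolynomial.mem_support_iff.mpr hne0⟩
    have hpsig : psi p g = 0 := by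
      have hgd : (psi p g).coeff d = 0 := by
        have h1 : (psi p (f - g)).coeff d = 0 :=
          psi_apply_zero p (f - g) d (fun m hm => (hhsupp m hm).1)
        have h2 : psi p (f - g) = - psi p g := by rw [map_sub, hf, zero_sub]
        have h3 : (-(psi p g) : LaurentPolynomial (Polynomial K)).coeff d = 0 := h2 ▸ h1
        rw [AddMonoidAlgebra.coeff_neg, Finsupp.neg_apply] at h3
        exact neg_eq_zero.mp h3
      apply LaurentPolynomial.ext
      intro a
      by_cases ha : a = d
      · rw [ha]; exact hgd
      · exact psi_apply_zero p g a (fun m hm => by rw [hgsupp m hm]; exact fun h => ha h.symm)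
    have hpsih : psi p (f - g) = 0 := by rw [map_sub, hf, hpsig, sub_zero]
    have hgmem : g ∈ Ideal.span {MvPolynomial.X 0 * MvPolynomial.X 1 - PhiIn K p} := by
      rcases le_or_gt 0 d with hdpos | hdneg
      · refine hom_mem_pos p d.toNat g (fun m hm => ?_) hpsig
        have h1 : (m 0 : ℤ) - (m 1 : ℤ) = d := hgsupp m hm
        omega
      · refine hom_mem_neg p hp (-d).toNat g (fun m hm => ?_) hpsig
        have h1 : (m 0 : ℤ) - (m 1 : ℤ) = d := hgsupp m hm
        omega
    have hdmem : d ∈ f.support.image dlt := Finset.mem_image_of_mem dlt hm₀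
    have hsubset : (f - g).support.image dlt ⊆ (f.support.image dlt).erase d := by
      intro x hx
      obtain ⟨m, hm, rfl⟩ := Finset.mem_image.mp hx
      exact Finset.mem_erase.mpr ⟨(hhsupp m hm).1, Finset.mem_image_of_mem dlt (hhsupp m hm).2⟩
    have hcard' : ((f - g).support.image dlt).card ≤ N := by
      have h1 := Finset.card_le_card hsubset
      rw [Finset.card_erase_of_mem hdmem] at h1
      omega
    have hhmem := ih (f - g) hcard' hpsih
    have hfgg : f = g + (f - g) := by ring
    rw [hfgg]
    exact Ideal.add_mem _ hgmem hhmem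

lemma psi_gen (p : Polynomial K) :
    psi p (MvPolynomial.X 0 * MvPolynomial.X 1 - PhiIn K p) = 0 := by
  rw [map_sub, psi_X0X1, psi_PhiIn, sub_self]

lemma ker_psi (p : Polynomial K) (hp : p ≠ 0) (f : MvPolynomial (Fin 3) K)
    (hf : psi p f = 0) :
    f ∈ Ideal.span {MvPolynomial.X 0 * MvPolynomial.X 1 - PhiIn K p} :=
  ker_psi_aux p hp _ f le_rfl hf

lemma mem_ker_of_gen (p : Polynomial K)
    (φ : MvPolynomial (Fin 3) K →+* LaurentPolynomial (Polynomial K))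
    (hgen : φ (MvPolynomial.X 0 * MvPolynomial.X 1 - PhiIn K p) = 0)
    (x : MvPolynomial (Fin 3) K)
    (hx : x ∈ Ideal.span {MvPolynomial.X 0 * MvPolynomial.X 1 - PhiIn K p}) : φ x = 0 := by
  obtain ⟨y, rfl⟩ := Ideal.mem_span_singleton.mp hx
  rw [map_mul, hgen, zero_mul]

lemma psi2_PhiIn (p q : Polynomial K) : psi2 p (PhiIn K q) = LaurentPolynomial.C q := by
  rw [PhiIn, Polynomial.coe_eval₂RingHom, Polynomial.hom_eval₂]
  have h1 : (psi2 p).comp MvPolynomial.C = (LaurentPolynomial.C).comp (Polynomial.C) := by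
    ext k; simp [psi2, phi0]
  have h2 : psi2 p (MvPolynomial.X 2) = LaurentPolynomial.C Polynomial.X := by simp [psi2]
  rw [h1, h2, ← Polynomial.hom_eval₂, Polynomial.eval₂_C_X]

lemma psi2_gen (p : Polynomial K) :
    psi2 p (MvPolynomial.X 0 * MvPolynomial.X 1 - PhiIn K p) = 0 := by
  rw [map_sub, map_mul, psi2_PhiIn]
  have h0 : psi2 p (MvPolynomial.X 0) = LaurentPolynomial.C p * T (-1) := by simp [psi2]
  have h1 : psi2 p (MvPolynomial.X 1) = T 1 := by simp [psi2]
  rw [h0, h1, mul_assoc, ← T_add]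
  norm_num

lemma notUnit_X0 (p : Polynomial K) (hp : p ≠ 0) (hpu : ¬ IsUnit p)
    (I : Ideal (MvPolynomial (Fin 3) K))
    (hIsp : I = Ideal.span {MvPolynomial.X 0 * MvPolynomial.X 1 - PhiIn K p}) :
    ¬ IsUnit (Ideal.Quotient.mk I (MvPolynomial.X 0)) := by
  intro h
  obtain ⟨y, hy⟩ := h.exists_right_inv
  obtain ⟨g, rfl⟩ := Ideal.Quotient.mk_surjective y
  have hmem : MvPolynomial.X 0 * g - 1 ∈ I := by
    rw [← Ideal.Quotient.eq_zero_iff_mem, map_sub, map_mul, map_one, hy, sub_self]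
  rw [hIsp] at hmem
  have h2 : psi2 p (MvPolynomial.X 0 * g - 1) = 0 :=
    mem_ker_of_gen p (psi2 p) (psi2_gen p) _ hmem
  rw [map_sub, map_mul, map_one, sub_eq_zero] at h2
  have h0 : psi2 p (MvPolynomial.X 0) = LaurentPolynomial.C p * T (-1) := by simp [psi2]
  rw [h0] at h2
  have hCu : IsUnit (LaurentPolynomial.C p) := by
    have h3 : IsUnit (LaurentPolynomial.C p * T (-1) : LaurentPolynomial (Polynomial K)) :=
      IsUnit.of_mul_eq_one _ h2
    have h4 := h3.mul (isUnit_T (R := Polynomial K) 1)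
    rwa [mul_assoc, ← T_add, show (-1 : ℤ) + 1 = 0 by ring, T_zero, mul_one] at h4
  obtain ⟨w, mm, hw, hweq⟩ := laurent_isUnit hCu
  by_cases hmm : mm = 0
  · subst hmm
    rw [T_zero, mul_one] at hweq
    have : p = w := by
      have := congrArg (fun z : LaurentPolynomial (Polynomial K) => z.coeff (0:ℤ)) hweq
      simpa using this
    exact hpu (this ▸ hw)
  · have := congrArg (fun z : LaurentPolynomial (Polynomial K) => z.coeff mm) hweq
    rw [← single_eq_C_mul_T] at this
    simp only [LaurentPolynomial.C_apply, AddMonoidAlgebra.coeff_single, Finsupp.single_eq_same] at this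
    rw [if_neg hmm] at this
    exact hw.ne_zero this.symm



end ChateletAux

/-- Let `K` be an algebraically closed field of characteristic zero and
`P(t) = c(t - e₁)⋯(t - e_n)` a separable polynomial with `c ≠ 0` (and `n ≥ 1`).
Every invertible regular function on the affine surface `X : u₁u₂ = P(t)` is a
nonzero constant: `O(X)* = K*`. -/
theorem units_of_affine_chatelet_are_constant
    (K : Type) [Field K] [IsAlgClosed K] [CharZero K]
    (n : ℕ) (hn : 0 < n) (c : K) (hc : c ≠ 0)
    (e : Fin n → K) (he : Function.Injective e)
    (P : MvPolynomial (Fin 3) K)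
    (hP : P = C c * ∏ j : Fin n, (X 2 - C (e j)))
    (I : Ideal (MvPolynomial (Fin 3) K))
    (hI : I = Ideal.span {X 0 * X 1 - P}) :
    ∀ r : MvPolynomial (Fin 3) K ⧸ I, IsUnit r →
      ∃ a : K, a ≠ 0 ∧ r = algebraMap K (MvPolynomial (Fin 3) K ⧸ I) a := by
  intro r hr
  set p : Polynomial K := Polynomial.C c * ∏ j : Fin n, (Polynomial.X - Polynomial.C (e j)) with hpdef
  have hPhiInp : PhiIn K p = P := by
    rw [hP, hpdef, PhiIn]
    simp only [Polynomial.coe_eval₂RingHom, map_mul, map_prod, map_sub, Polynomial.eval₂_X,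
      Polynomial.eval₂_C]
  have hIsp : I = Ideal.span {MvPolynomial.X 0 * MvPolynomial.X 1 - PhiIn K p} := by
    rw [hI, hPhiInp]
  have hpne : p ≠ 0 := mul_ne_zero (Polynomial.C_ne_zero.mpr hc)
    (Finset.prod_ne_zero_iff.mpr fun j _ => Polynomial.X_sub_C_ne_zero (e j))
  have hpnu : ¬ IsUnit p := by
    intro hu
    have hdeg := Polynomial.natDegree_eq_zero_of_isUnit hu
    rw [hpdef, Polynomial.natDegree_C_mul hc,
      Polynomial.natDegree_prod _ _ (fun j _ => Polynomial.X_sub_C_ne_zero (e j))] at hdeg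
    simp only [Polynomial.natDegree_X_sub_C, Finset.sum_const, Finset.card_univ,
      Fintype.card_fin, smul_eq_mul, mul_one] at hdeg
    omega
  obtain ⟨f, rfl⟩ := Ideal.Quotient.mk_surjective r
  obtain ⟨s, hs⟩ := hr.exists_right_inv
  obtain ⟨g, rfl⟩ := Ideal.Quotient.mk_surjective s
  have hfg : f * g - 1 ∈ I := by
    rw [← Ideal.Quotient.eq_zero_iff_mem, map_sub, map_mul, map_one, hs, sub_self]
  rw [hIsp] at hfg
  have h1 : psi p f * psi p g = 1 := by
    have := mem_ker_of_gen p (psi p) (psi_gen p) _ hfg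
    rwa [map_sub, map_mul, map_one, sub_eq_zero] at this
  obtain ⟨u, m, hu, hfeq⟩ := laurent_isUnit (IsUnit.of_mul_eq_one _ h1)
  obtain ⟨a, ha, hCa⟩ := Polynomial.isUnit_iff.mp hu
  have hnotX0 := notUnit_X0 p hpne hpnu I hIsp
  rcases le_or_gt 0 m with hm | hm
  · set k := m.toNat with hkdef
    have hk : (k:ℤ) = m := Int.toNat_of_nonneg hm
    have hsub : psi p (f - MvPolynomial.C a * MvPolynomial.X 0 ^ k) = 0 := by
      rw [map_sub, map_mul, map_pow, psi_C, psi_X0, hfeq, ← hCa, LaurentPolynomial.T_pow,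
        show ((k:ℕ):ℤ) * 1 = m by rw [hk]; ring, sub_self]
    have hmk : Ideal.Quotient.mk I f
        = Ideal.Quotient.mk I (MvPolynomial.C a) * (Ideal.Quotient.mk I (MvPolynomial.X 0))^k := by
      rw [← map_pow, ← map_mul, ← sub_eq_zero, ← map_sub, Ideal.Quotient.eq_zero_iff_mem, hIsp]
      exact ker_psi p hpne _ hsub
    by_cases hk0 : k = 0
    · refine ⟨a, ha.ne_zero, ?_⟩
      rw [hmk, hk0, pow_zero, mul_one, ← MvPolynomial.algebraMap_eq, Ideal.Quotient.mk_algebraMap]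
    · exfalso
      apply hnotX0
      have h5 : IsUnit (Ideal.Quotient.mk I (MvPolynomial.C a)
          * (Ideal.Quotient.mk I (MvPolynomial.X 0))^k) := hmk ▸ hr
      exact (isUnit_pow_iff hk0).mp (isUnit_of_mul_isUnit_right h5)
  · exfalso
    apply hnotX0
    set k := (-m).toNat with hkdef
    have hk : (k:ℤ) = -m := Int.toNat_of_nonneg (by omega)
    have hk0 : k ≠ 0 := by omega
    have hsub : psi p (f * MvPolynomial.X 0 ^ k - MvPolynomial.C a) = 0 := by
      rw [map_sub, map_mul, map_pow, psi_C, psi_X0, hfeq, ← hCa, LaurentPolynomial.T_pow, mul_assoc, ← LaurentPolynomial.T_add,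
        show m + ((k:ℕ):ℤ) * 1 = 0 by rw [hk]; ring, LaurentPolynomial.T_zero, mul_one, sub_self]
    have hmk : Ideal.Quotient.mk I f * (Ideal.Quotient.mk I (MvPolynomial.X 0))^k
        = Ideal.Quotient.mk I (MvPolynomial.C a) := by
      rw [← map_pow, ← map_mul, ← sub_eq_zero, ← map_sub, Ideal.Quotient.eq_zero_iff_mem, hIsp]
      exact ker_psi p hpne _ hsub
    have h5 : IsUnit (Ideal.Quotient.mk I f * (Ideal.Quotient.mk I (MvPolynomial.X 0))^k) := by
      rw [hmk, ← MvPolynomial.algebraMap_eq, Ideal.Quotient.mk_algebraMap]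
      exact ha.map (algebraMap K (MvPolynomial (Fin 3) K ⧸ I))
    exact (isUnit_pow_iff hk0).mp (isUnit_of_mul_isUnit_right h5)
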